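/- Let G be a group and let (𝒳,ρ) be a finite categorified G-set whose underlying category is not equivalent (as a plain category) to any discrete category. Then there exist no finite right G-sets Y and Z and no finite categorified G-set ℰ such that 𝒳 ⊎ I(Z) ⊎ ℰ is weakly equivalent to I(Y) ⊎ ℰ. In particular, the induced ring homomorphism from the classical Burnside ring of G to the categorified Burnside ring of G is not surjective. -/

import Mathlib

/-!
Common framework: a *categorified `G`-set* is a (small) category `C` equipped with a right
`G`-action by endofunctors, i.e. functors `ρ g : C ⥤ C` with `ρ 1 = 𝟭 C` and
`ρ (g * h) = ρ g ⋙ ρ h`.  Equivariant functors, equivariant natural transformations and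
weak equivalences are as in the paper.
-/

open CategoryTheory

universe w v u v₁ v₂ v₃ v₄ u₁ u₂ u₃ u₄

/-- A right action of a group `G` on a category `C` by endofunctors: the data making the
category `C` into a *categorified `G`-set*. -/
structure CatAction (G : Type w) [Group G] (C : Type u) [Category.{v} C] where
  ρ : G → C ⥤ C
  map_one : ρ 1 = 𝟭 C
  map_mul : ∀ g h : G, ρ (g * h) = ρ g ⋙ ρ h

variable {G : Type w} [Group G]

/-- Equivariance of a functor between categorified `G`-sets. -/
def IsEquivF {C : Type u₁} {D : Type u₂} [Category.{v₁} C] [Category.{v₂} D]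
    (ρ : CatAction G C) (σ : CatAction G D) (F : C ⥤ D) : Prop :=
  ∀ g : G, ρ.ρ g ⋙ F = F ⋙ σ.ρ g

theorem IsEquivF.id {C : Type u₁} [Category.{v₁} C] (ρ : CatAction G C) :
    IsEquivF ρ ρ (𝟭 C) := fun _ => rfl

theorem IsEquivF.comp {C : Type u₁} {D : Type u₂} {E : Type u₃}
    [Category.{v₁} C] [Category.{v₂} D] [Category.{v₃} E]
    {ρ : CatAction G C} {σ : CatAction G D} {τ : CatAction G E}
    {F : C ⥤ D} {P : D ⥤ E} (hF : IsEquivF ρ σ F) (hP : IsEquivF σ τ P) :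
    IsEquivF ρ τ (F ⋙ P) := fun g => by
  rw [← Functor.assoc, hF g, Functor.assoc, hP g, ← Functor.assoc]

/-- Equivariance of a natural transformation between equivariant functors: at every object
`x` the component at `ρ g x` coincides (through the canonical identifications) with `σ g`
applied to the component at `x`. -/
def IsEquivNT {C : Type u₁} {D : Type u₂} [Category.{v₁} C] [Category.{v₂} D]
    (ρ : CatAction G C) (σ : CatAction G D) {F F' : C ⥤ D}
    (hF : IsEquivF ρ σ F) (hF' : IsEquivF ρ σ F') (α : F ⟶ F') : Prop :=
  ∀ (g : G) (x : C),
    α.app ((ρ.ρ g).obj x) =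
      eqToHom (Functor.congr_obj (hF g) x) ≫ (σ.ρ g).map (α.app x) ≫
        eqToHom (Functor.congr_obj (hF' g) x).symm

/-- Weak equivalence of categorified `G`-sets: a pair of equivariant functors, quasi-inverse
to each other through equivariant natural isomorphisms. -/
def WeakEquivCat {C : Type u₁} {D : Type u₂} [Category.{v₁} C] [Category.{v₂} D]
    (ρ : CatAction G C) (σ : CatAction G D) : Prop :=
  ∃ (F : C ⥤ D) (P : D ⥤ C) (hF : IsEquivF ρ σ F) (hP : IsEquivF σ ρ P)
    (η : F ⋙ P ≅ 𝟭 C) (ε : P ⋙ F ≅ 𝟭 D),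
    IsEquivNT ρ ρ (hF.comp hP) (IsEquivF.id ρ) η.hom ∧
    IsEquivNT σ σ (hP.comp hF) (IsEquivF.id σ) ε.hom
section SumPart

variable {C : Type u} {D : Type u} [Category.{v} C] [Category.{v} D]

theorem sum_id_id : (𝟭 C).sum (𝟭 D) = 𝟭 (C ⊕ D) :=
  CategoryTheory.Functor.ext (fun X => by cases X <;> rfl)
    (fun X Y f => by cases X <;> cases Y <;> obtain ⟨f⟩ := f <;>
      exact ((Category.id_comp _).trans (Category.comp_id _)).symm)

theorem sum_comp_sum {C' D' C'' D'' : Type u}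
    [Category.{v} C'] [Category.{v} D'] [Category.{v} C''] [Category.{v} D'']
    (F : C ⥤ C') (F' : C' ⥤ C'') (K : D ⥤ D') (K' : D' ⥤ D'') :
    (F ⋙ F').sum (K ⋙ K') = F.sum K ⋙ F'.sum K' :=
  CategoryTheory.Functor.ext (fun X => by cases X <;> rfl)
    (fun X Y f => by cases X <;> cases Y <;> obtain ⟨f⟩ := f <;>
      exact ((Category.id_comp _).trans (Category.comp_id _)).symm)

/-- The disjoint union of two categorified `G`-sets, with the componentwise action. -/
def CatAction.sum (ρ : CatAction G C) (τ : CatAction G D) : CatAction G (C ⊕ D) where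
  ρ g := (ρ.ρ g).sum (τ.ρ g)
  map_one := by simp only [ρ.map_one, τ.map_one, sum_id_id]
  map_mul g h := by simp only [ρ.map_mul, τ.map_mul, sum_comp_sum]

end SumPart
section RightActions

/-- A right action of the group `G` on a type `X`: a right `G`-set. -/
structure RightAction (G : Type w) [Group G] (X : Type u) where
  act : X → G → X
  act_one : ∀ x, act x 1 = x
  act_mul : ∀ (x : X) (g h : G), act x (g * h) = act (act x g) h

/-- Equivariant maps of right `G`-sets. -/
def IsEquivMap {X : Type u₁} {Y : Type u₂} (a : RightAction G X) (b : RightAction G Y)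
    (φ : X → Y) : Prop :=
  ∀ (x : X) (g : G), φ (a.act x g) = b.act (φ x) g

/-- The discrete categorified `G`-set `I(X)` associated to a right `G`-set `X`. -/
def discAction {X : Type u} (a : RightAction G X) : CatAction G (Discrete X) where
  ρ g := Discrete.functor fun x => ⟨a.act x g⟩
  map_one := CategoryTheory.Functor.ext
    (fun x => by cases x with | mk x => simp [a.act_one])
    (fun _ _ _ => Subsingleton.elim _ _)
  map_mul g h := CategoryTheory.Functor.ext
    (fun x => by cases x with | mk x => simp [a.act_mul])
    (fun _ _ _ => Subsingleton.elim _ _)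

/-- The trivial action of `G` on any category. -/
def trivialCatAction (G : Type w) [Group G] (C : Type u) [Category.{v} C] :
    CatAction G C where
  ρ _ := 𝟭 C
  map_one := rfl
  map_mul _ _ := rfl

end RightActions

section BadAux

open Sum

/-- An object is *bad* if it witnesses a failure of the category to be (equivalent to)
discrete: a non-invertible morphism out of it, or two distinct parallel morphisms. -/
def Bad {A : Type u₁} [Category.{v₁} A] (x : A) : Prop :=
  ∃ (y : A) (f : x ⟶ y), ¬ IsIso f ∨ ∃ g : x ⟶ y, f ≠ g

theorem bad_of_iso {A : Type u₁} [Category.{v₁} A] {x x' : A} (i : x ≅ x') (h : Bad x) :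
    Bad x' := by
  obtain ⟨y, f, h⟩ := h
  refine ⟨y, i.inv ≫ f, ?_⟩
  rcases h with h | ⟨g, hg⟩
  · left
    intro hi
    refine h ?_
    have : IsIso (i.hom ≫ i.inv ≫ f) := inferInstance
    simpa using this
  · right
    exact ⟨i.inv ≫ g, by simpa [cancel_epi] using hg⟩

theorem bad_map {A : Type u₁} {B : Type u₂} [Category.{v₁} A] [Category.{v₂} B]
    (F : A ⥤ B) [F.Full] [F.Faithful] {x : A} (h : Bad x) : Bad (F.obj x) := by
  obtain ⟨y, f, h⟩ := h
  refine ⟨F.obj y, F.map f, ?_⟩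
  rcases h with h | ⟨g, hg⟩
  · exact Or.inl fun hi => h (isIso_of_fully_faithful F f)
  · exact Or.inr ⟨F.map g, fun e => hg (F.map_injective e)⟩

/-- The setoid of isomorphism on bad objects. -/
def badSetoid (A : Type u₁) [Category.{v₁} A] : Setoid {x : A // Bad x} where
  r x y := Nonempty (x.1 ≅ y.1)
  iseqv := ⟨fun x => ⟨Iso.refl _⟩, fun ⟨i⟩ => ⟨i.symm⟩, fun ⟨i⟩ ⟨j⟩ => ⟨i.trans j⟩⟩

/-- Isomorphism classes of bad objects. -/
def BadCls (A : Type u₁) [Category.{v₁} A] : Type u₁ := Quotient (badSetoid A)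

noncomputable instance badClsFinite (A : Type u₁) [Category.{v₁} A] [Finite A] :
    Finite (BadCls A) :=
  Quotient.finite _

/-- An equivalence of categories induces a bijection on isomorphism classes of bad
objects. -/
noncomputable def badClsEquiv {A : Type u₁} {B : Type u₂} [Category.{v₁} A] [Category.{v₂} B]
    (e : A ≌ B) : BadCls A ≃ BadCls B where
  toFun := Quotient.map (fun x => ⟨e.functor.obj x.1, bad_map e.functor x.2⟩)
    (fun x y ⟨i⟩ => ⟨e.functor.mapIso i⟩)
  invFun := Quotient.map (fun x => ⟨e.inverse.obj x.1, bad_map e.inverse x.2⟩)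
    (fun x y ⟨i⟩ => ⟨e.inverse.mapIso i⟩)
  left_inv := by
    rintro ⟨x⟩
    exact Quotient.sound ⟨(e.unitIso.app x.1).symm⟩
  right_inv := by
    rintro ⟨x⟩
    exact Quotient.sound ⟨e.counitIso.app x.1⟩

section SumBad

variable {A B : Type u₁} [Category.{v₁} A] [Category.{v₁} B]

/-- Transfer an isomorphism into the left summand. -/
def isoSumInl {x y : A} (i : x ≅ y) : (Sum.inl x : A ⊕ B) ≅ Sum.inl y where
  hom := ULift.up i.hom
  inv := ULift.up i.inv
  hom_inv_id := congrArg ULift.up i.hom_inv_id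
  inv_hom_id := congrArg ULift.up i.inv_hom_id

/-- Transfer an isomorphism out of the left summand. -/
def isoOfSumInl {x y : A} (i : (Sum.inl x : A ⊕ B) ≅ Sum.inl y) : x ≅ y where
  hom := i.hom.down
  inv := i.inv.down
  hom_inv_id := congrArg ULift.down i.hom_inv_id
  inv_hom_id := congrArg ULift.down i.inv_hom_id

/-- Transfer an isomorphism into the right summand. -/
def isoSumInr {x y : B} (i : x ≅ y) : (Sum.inr x : A ⊕ B) ≅ Sum.inr y where
  hom := ULift.up i.hom
  inv := ULift.up i.inv
  hom_inv_id := congrArg ULift.up i.hom_inv_id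
  inv_hom_id := congrArg ULift.up i.inv_hom_id

/-- Transfer an isomorphism out of the right summand. -/
def isoOfSumInr {x y : B} (i : (Sum.inr x : A ⊕ B) ≅ Sum.inr y) : x ≅ y where
  hom := i.hom.down
  inv := i.inv.down
  hom_inv_id := congrArg ULift.down i.hom_inv_id
  inv_hom_id := congrArg ULift.down i.inv_hom_id

theorem bad_inl {x : A} (h : Bad (Sum.inl x : A ⊕ B)) : Bad x := by
  obtain ⟨y, f, h⟩ := h
  cases y with
  | inr y => exact (f : PEmpty).elim
  | inl y =>
    refine ⟨y, f.down, ?_⟩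
    rcases h with h | ⟨g, hg⟩
    · left
      intro hi
      obtain ⟨g, hg1, hg2⟩ := hi
      exact h ⟨(ULift.up g : (Sum.inl y : A ⊕ B) ⟶ Sum.inl x), congrArg ULift.up hg1, congrArg ULift.up hg2⟩
    · exact Or.inr ⟨g.down, fun e => hg (congrArg ULift.up e)⟩

theorem bad_inr {x : B} (h : Bad (Sum.inr x : A ⊕ B)) : Bad x := by
  obtain ⟨y, f, h⟩ := h
  cases y with
  | inl y => exact (f : PEmpty).elim
  | inr y =>
    refine ⟨y, f.down, ?_⟩
    rcases h with h | ⟨g, hg⟩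
    · left
      intro hi
      obtain ⟨g, hg1, hg2⟩ := hi
      exact h ⟨(ULift.up g : (Sum.inr y : A ⊕ B) ⟶ Sum.inr x), congrArg ULift.up hg1, congrArg ULift.up hg2⟩
    · exact Or.inr ⟨g.down, fun e => hg (congrArg ULift.up e)⟩

theorem bad_sum_inl {x : A} (h : Bad x) : Bad (Sum.inl x : A ⊕ B) := by
  obtain ⟨y, f, h⟩ := h
  refine ⟨Sum.inl y, ULift.up f, ?_⟩
  rcases h with h | ⟨g, hg⟩
  · left
    intro hi
    obtain ⟨g, hg1, hg2⟩ := hi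
    exact h ⟨g.down, congrArg ULift.down hg1, congrArg ULift.down hg2⟩
  · exact Or.inr ⟨ULift.up g, fun e => hg (congrArg ULift.down e)⟩

theorem bad_sum_inr {x : B} (h : Bad x) : Bad (Sum.inr x : A ⊕ B) := by
  obtain ⟨y, f, h⟩ := h
  refine ⟨Sum.inr y, ULift.up f, ?_⟩
  rcases h with h | ⟨g, hg⟩
  · left
    intro hi
    obtain ⟨g, hg1, hg2⟩ := hi
    exact h ⟨g.down, congrArg ULift.down hg1, congrArg ULift.down hg2⟩
  · exact Or.inr ⟨ULift.up g, fun e => hg (congrArg ULift.down e)⟩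

/-- Inclusion of bad classes of the left summand. -/
noncomputable def badClsInl : BadCls A → BadCls (A ⊕ B) :=
  Quotient.map (fun x => ⟨Sum.inl x.1, bad_sum_inl x.2⟩) (fun x y ⟨i⟩ => ⟨isoSumInl i⟩)

/-- Inclusion of bad classes of the right summand. -/
noncomputable def badClsInr : BadCls B → BadCls (A ⊕ B) :=
  Quotient.map (fun x => ⟨Sum.inr x.1, bad_sum_inr x.2⟩) (fun x y ⟨i⟩ => ⟨isoSumInr i⟩)

/-- Iso classes of bad objects of a sum category. -/
noncomputable def badClsSum : BadCls (A ⊕ B) ≃ BadCls A ⊕ BadCls B where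
  toFun := Quotient.lift
    (fun x => match x with
      | ⟨Sum.inl a, h⟩ => Sum.inl (⟦⟨a, bad_inl h⟩⟧ : BadCls A)
      | ⟨Sum.inr b, h⟩ => Sum.inr (⟦⟨b, bad_inr h⟩⟧ : BadCls B))
    (by
      rintro ⟨(a | a), ha⟩ ⟨(b | b), hb⟩ ⟨i⟩
      · exact congrArg Sum.inl (Quotient.sound ⟨isoOfSumInl i⟩)
      · exact (i.hom : PEmpty).elim
      · exact (i.hom : PEmpty).elim
      · exact congrArg Sum.inr (Quotient.sound ⟨isoOfSumInr i⟩))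
  invFun := Sum.elim badClsInl badClsInr
  left_inv := by rintro ⟨⟨(a | a), h⟩⟩ <;> rfl
  right_inv := by rintro (x | x) <;> induction x using Quotient.ind <;> rfl

end SumBad

theorem not_bad_discrete {T : Type u₁} (x : Discrete T) : ¬ Bad x := by
  rintro ⟨y, f, h | ⟨g, hg⟩⟩
  · exact h inferInstance
  · exact hg (Subsingleton.elim f g)

instance badClsDiscreteIsEmpty (T : Type u₁) : IsEmpty (BadCls (Discrete T)) := by
  constructor
  rintro ⟨⟨x, h⟩⟩
  exact not_bad_discrete x h

/-- A category with no bad objects is equivalent to a discrete category. -/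
noncomputable def equivDiscreteOfNotBad {A : Type u₁} [Category.{v₁} A]
    (h : ∀ x : A, ¬ Bad x) : A ≌ Discrete (Quotient (isIsomorphicSetoid A)) := by
  letI S := isIsomorphicSetoid A
  haveI hsub : ∀ x y : A, Subsingleton (x ⟶ y) := fun x y =>
    ⟨fun f g => by_contra fun hfg => h x ⟨y, f, Or.inr ⟨g, hfg⟩⟩⟩
  haveI hiso : ∀ (x y : A) (f : x ⟶ y), IsIso f := fun x y f =>
    by_contra fun hf => h x ⟨y, f, Or.inl hf⟩
  refine CategoryTheory.Equivalence.mk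
    { obj := fun x => ⟨Quotient.mk S x⟩
      map := fun {x y} f => eqToHom (by
        haveI := hiso x y f
        exact congrArg Discrete.mk
          (Quotient.sound (show IsIsomorphic x y from ⟨asIso f⟩)))
      map_id := fun _ => Subsingleton.elim _ _
      map_comp := fun _ _ => Subsingleton.elim _ _ }
    (Discrete.functor fun q => q.out)
    (NatIso.ofComponents
      (fun x => (Classical.choice (Quotient.mk_out (s := S) x)).symm)
      (fun _ => Subsingleton.elim _ _))
    (Discrete.natIso (fun q => eqToIso (by
      cases q with
      | mk q => exact Discrete.ext (Quotient.out_eq q))))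

end BadAux

/-- Let `𝒳` be a finite categorified `G`-set whose underlying category is
not equivalent (as a plain category) to any discrete category.  Then there are no finite
right `G`-sets `Y`, `Z` and no finite categorified `G`-set `ℰ` with
`𝒳 ⊎ I(Z) ⊎ ℰ` weakly equivalent to `I(Y) ⊎ ℰ`.  (In particular the induced ring
homomorphism from the classical Burnside ring to the categorified Burnside ring is not
surjective.) -/
theorem burnside_comparison_not_surjective {G : Type w} [Group G]
    {C : Type u} [SmallCategory C] [Finite C] [∀ x y : C, Finite (x ⟶ y)]
    (ρ : CatAction G C) (hC : ∀ T : Type u, IsEmpty (C ≌ Discrete T)) :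
    ¬ ∃ (Y Z : Type u) (bY : RightAction G Y) (bZ : RightAction G Z)
        (E : Cat.{u, u}) (ε : CatAction G E),
      Finite Y ∧ Finite Z ∧ Finite E ∧ (∀ p q : E, Finite (p ⟶ q)) ∧
      WeakEquivCat (ρ.sum ((discAction bZ).sum ε)) ((discAction bY).sum ε) := by
  rintro ⟨Y, Z, bY, bZ, E, ε, hY, hZ, hE, hEhom, F, P, hF, hP, η, εiso, -, -⟩
  haveI : Finite Y := hY
  haveI : Finite (E : Type u) := hE
  -- the underlying (non-equivariant) equivalence of categories
  let e : (C ⊕ (Discrete Z ⊕ E)) ≌ (Discrete Y ⊕ E) := CategoryTheory.Equivalence.mk F P η.symm εiso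
  -- bijections on iso classes of bad objects
  let eL : BadCls (C ⊕ (Discrete Z ⊕ E)) ≃ BadCls C ⊕ (BadCls (Discrete Z) ⊕ BadCls E) :=
    badClsSum.trans ((Equiv.refl _).sumCongr badClsSum)
  let eR : BadCls (Discrete Y ⊕ E) ≃ BadCls (Discrete Y) ⊕ BadCls E := badClsSum
  have hcard := Nat.card_congr ((eL.symm.trans (badClsEquiv e)).trans eR)
  rw [Nat.card_sum, Nat.card_sum, Nat.card_sum,
    Nat.card_of_isEmpty (α := BadCls (Discrete Z)),
    Nat.card_of_isEmpty (α := BadCls (Discrete Y))] at hcard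
  have hzero : Nat.card (BadCls C) = 0 := by omega
  have hempty : IsEmpty (BadCls C) := by
    rcases Nat.card_eq_zero.1 hzero with h | h
    · exact h
    · exact absurd (badClsFinite C) h.not_finite
  have hnobad : ∀ x : C, ¬ Bad x := fun x hx => hempty.false ⟦⟨x, hx⟩⟧
  exact (hC _).false (equivDiscreteOfNotBad hnobad)
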